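/- Gessel's Toeplitz determinant identity: for two sequences of indeterminates t = (t_1,t_2,…) and s = (s_1,s_2,…), and any d ≥ 1, ∑_{λ : ℓ(λ) ≤ d} s_λ(t) s_λ(s) = det_{1≤i,j≤d}(φ_{i-j}(t,s)), where φ_m(t,s) is the coefficient of z^m in exp(∑_{k≥1} t_k z^k + ∑_{k≥1} s_k z^{-k}), the sum is over all partitions λ with at most d parts, and s_λ denotes the Schur polynomial in normalized power sum variables via the Jacobi–Trudi formula. -/

import Mathlib

/-- `hpoly k t` is the polynomial `h_k` in the variables `t_1, t_2, …` defined by the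
generating function `∑_{k≥0} h_k(t) z^k = exp(∑_{j≥1} t_j z^j)`; concretely it is the
coefficient of `z^k` in `∑_{m=0}^{k} (1/m!) (∑_{j=1}^{k} t_j z^j)^m` (higher terms of the
exponential series, and variables `t_j` with `j > k`, do not contribute to this
coefficient). -/
noncomputable def hpoly (k : ℕ) (t : ℕ → ℂ) : ℂ :=
  Polynomial.coeff
    (∑ m ∈ Finset.range (k + 1),
      ((m.factorial : ℂ)⁻¹) •
        (∑ j ∈ Finset.Icc 1 k, Polynomial.C (t j) * Polynomial.X ^ j) ^ m) k

/-- `h_m` for an integer index: `h_m = 0` for `m < 0`. -/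
noncomputable def hZ (m : ℤ) (t : ℕ → ℂ) : ℂ :=
  if 0 ≤ m then hpoly m.toNat t else 0

/-- The Schur polynomial `s_λ` in the normalized power sum variables, defined by the
Jacobi–Trudi formula `s_λ(t) = det_{1≤i,j≤ℓ(λ)} (h_{λ_i - i + j}(t))`, where
`λ_1 ≥ λ_2 ≥ ⋯` are the parts of `λ` in decreasing order. -/
noncomputable def schur {n : ℕ} (lam : n.Partition) (t : ℕ → ℂ) : ℂ :=
  Matrix.det (Matrix.of fun i j : Fin (lam.parts.sort (· ≤ ·)).reverse.length =>
    hZ ((((lam.parts.sort (· ≤ ·)).reverse.get i : ℕ) : ℤ) - (i : ℤ) + (j : ℤ)) t)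

/-- The graded Toeplitz symbol `exp(∑_{k≥1} t_k (Xz)^k) · exp(∑_{k≥1} s_k (X/z)^k)`:
a formal power series in the grading (book-keeping) variable `X` whose coefficients are
Laurent polynomials in `z` (the variable of `LaurentPolynomial ℂ`).  Here
`exp(∑ t_k z^k) = ∑_a h_a(t) z^a` by the definition of the `h_a`. -/
noncomputable def gesselSymbol (t s : ℕ → ℂ) : PowerSeries (LaurentPolynomial ℂ) :=
  (PowerSeries.mk fun a => LaurentPolynomial.C (hpoly a t) * LaurentPolynomial.T (a : ℤ)) *
  (PowerSeries.mk fun b => LaurentPolynomial.C (hpoly b s) * LaurentPolynomial.T (-(b : ℤ)))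

/-- `phi m t s` is the coefficient of `z^m` in
`exp(∑_{k≥1} t_k z^k + ∑_{k≥1} s_k z^{-k})`, recorded as a formal power series in the
grading variable `X` (with `t_k`, `s_k` placed in degree `k`), so that all occurring
sums are finite. -/
noncomputable def phi (m : ℤ) (t s : ℕ → ℂ) : PowerSeries ℂ :=
  PowerSeries.mk fun N => (PowerSeries.coeff N (gesselSymbol t s)).coeff m

/-! ### Auxiliary definitions and lemmas -/

noncomputable def hX (c : ℤ) (t : ℕ → ℂ) : PowerSeries ℂ :=
  if 0 ≤ c then PowerSeries.C (hpoly c.toNat t) * PowerSeries.X ^ c.toNat else 0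

lemma hpoly_zero (t : ℕ → ℂ) : hpoly 0 t = 1 := by simp [hpoly]

lemma hZ_zero (t : ℕ → ℂ) : hZ 0 t = 1 := by
  rw [hZ, if_pos le_rfl, Int.toNat_zero, hpoly_zero]

lemma hZ_of_neg {c : ℤ} (h : c < 0) (t : ℕ → ℂ) : hZ c t = 0 := if_neg (not_le.mpr h)

lemma hZ_ne_zero_nonneg {c : ℤ} {t : ℕ → ℂ} (h : hZ c t ≠ 0) : 0 ≤ c := by
  by_contra hc; exact h (hZ_of_neg (not_le.mp hc) t)

lemma coeff_hX_mul (n : ℕ) (a b : ℤ) (t s : ℕ → ℂ) :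
    PowerSeries.coeff n (hX a t * hX b s) =
      if a + b = n then hZ a t * hZ b s else 0 := by
  by_cases ha : 0 ≤ a
  · by_cases hb : 0 ≤ b
    · rw [hX, if_pos ha, hX, if_pos hb]
      have : (PowerSeries.C (hpoly a.toNat t) * PowerSeries.X ^ a.toNat) *
          (PowerSeries.C (hpoly b.toNat s) * PowerSeries.X ^ b.toNat) =
          PowerSeries.C (hpoly a.toNat t * hpoly b.toNat s) *
            PowerSeries.X ^ (a.toNat + b.toNat) := by
        rw [map_mul, pow_add]; ring
      rw [this, PowerSeries.coeff_C_mul, PowerSeries.coeff_X_pow]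
      rw [hZ, if_pos ha, hZ, if_pos hb]
      by_cases h : a + b = (n : ℤ)
      · rw [if_pos h, if_pos (by omega), mul_one]
      · rw [if_neg h, if_neg (by omega), mul_zero]
    · rw [hX, hX, if_neg hb, mul_zero, map_zero, hZ, hZ, if_neg hb, mul_zero, ite_self]
  · rw [hX, if_neg ha, zero_mul, map_zero, hZ, if_neg ha, zero_mul, ite_self]

noncomputable def Mmat (d K : ℕ) (t s : ℕ → ℂ) : Matrix (Fin d) (Fin d) (PowerSeries ℂ) :=
  Matrix.of fun i j =>
    ∑ e : Fin K, hX ((e : ℤ) - (d - 1) + i) t * hX ((e : ℤ) - (d - 1) + j) s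

lemma coeff_phi (m : ℤ) (t s : ℕ → ℂ) (N : ℕ) :
    PowerSeries.coeff N (phi m t s) =
      ∑ p ∈ Finset.HasAntidiagonal.antidiagonal N,
        if (p.1 : ℤ) - p.2 = m then hpoly p.1 t * hpoly p.2 s else 0 := by
  rw [phi, PowerSeries.coeff_mk, gesselSymbol, PowerSeries.coeff_mul]
  rw [AddMonoidAlgebra.coeff_sum, Finsupp.finset_sum_apply]
  refine Finset.sum_congr rfl fun p _ => ?_
  rw [PowerSeries.coeff_mk, PowerSeries.coeff_mk,
    ← LaurentPolynomial.single_eq_C_mul_T, ← LaurentPolynomial.single_eq_C_mul_T,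
    AddMonoidAlgebra.single_mul_single, AddMonoidAlgebra.coeff_single_apply, sub_eq_add_neg]

lemma coeff_phi_eq_coeff_Mmat (d : ℕ) (N : ℕ) (t s : ℕ → ℂ)
    (i j : Fin d) (n : ℕ) (hn : n ≤ N) :
    PowerSeries.coeff n (phi ((i : ℤ) - (j : ℤ)) t s) =
      PowerSeries.coeff n (Mmat d (N + d) t s i j) := by
  rw [coeff_phi, Mmat, Matrix.of_apply, map_sum]
  simp_rw [coeff_hX_mul]
  refine Finset.sum_bij_ne_zero (fun p hp _ => (⟨p.2 + (d - 1) - (j : ℕ), by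
      have hj := j.isLt
      have hmem := Finset.HasAntidiagonal.mem_antidiagonal.mp hp
      omega⟩ : Fin (N + d))) ?_ ?_ ?_ ?_
  · intro p hp hne
    exact Finset.mem_univ _
  · intro p1 h11 h12 p2 h21 h22 heq
    have e1 := Finset.HasAntidiagonal.mem_antidiagonal.mp h11
    have e2 := Finset.HasAntidiagonal.mem_antidiagonal.mp h21
    have hj := j.isLt
    have : p1.2 + (d-1) - (j:ℕ) = p2.2 + (d-1) - (j:ℕ) := congrArg Fin.val heq
    have : p1.2 = p2.2 := by omega
    exact Prod.ext (by omega) this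
  · intro e _ hne
    rw [ne_eq, ite_eq_right_iff, not_forall] at hne
    obtain ⟨hcond, hval⟩ := hne
    have h1 : (0:ℤ) ≤ (e:ℤ) - (d-1) + i := hZ_ne_zero_nonneg (left_ne_zero_of_mul hval)
    have h2 : (0:ℤ) ≤ (e:ℤ) - (d-1) + j := hZ_ne_zero_nonneg (right_ne_zero_of_mul hval)
    refine ⟨(((e:ℤ) - (d-1) + i).toNat, ((e:ℤ) - (d-1) + j).toNat), ?_, ?_, ?_⟩
    · rw [Finset.HasAntidiagonal.mem_antidiagonal]; omega
    · rw [ne_eq, ite_eq_right_iff, not_forall]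
      exact ⟨by omega, by
        rw [hZ, if_pos h1, hZ, if_pos h2] at hval
        simpa using hval⟩
    · ext
      simp only
      omega
  · intro p hp hne
    have hmem := Finset.HasAntidiagonal.mem_antidiagonal.mp hp
    rw [ne_eq, ite_eq_right_iff, not_forall] at hne
    obtain ⟨hcond, _⟩ := hne
    have hj := j.isLt
    have hi := i.isLt
    have harg1 : ((p.2 + (d - 1) - (j:ℕ) : ℕ) : ℤ) - (d-1) + i = (p.1 : ℤ) := by
      push_cast [Nat.cast_sub (by omega : (j:ℕ) ≤ p.2 + (d-1))]; omega
    have harg2 : ((p.2 + (d - 1) - (j:ℕ) : ℕ) : ℤ) - (d-1) + j = (p.2 : ℤ) := by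
      push_cast [Nat.cast_sub (by omega : (j:ℕ) ≤ p.2 + (d-1))]; omega
    rw [if_pos hcond]
    rw [harg1, harg2, if_pos (by omega : (p.1:ℤ) + (p.2:ℤ) = (n:ℤ))]
    rw [hZ, if_pos (by omega : (0:ℤ) ≤ (p.1:ℤ)), hZ, if_pos (by omega : (0:ℤ) ≤ (p.2:ℤ))]
    simp

lemma coeff_det_congr {d N : ℕ} (M₁ M₂ : Matrix (Fin d) (Fin d) (PowerSeries ℂ))
    (h : ∀ i j, ∀ n ≤ N, PowerSeries.coeff n (M₁ i j) = PowerSeries.coeff n (M₂ i j)) :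
    PowerSeries.coeff N (Matrix.det M₁) = PowerSeries.coeff N (Matrix.det M₂) := by
  set I : Ideal (PowerSeries ℂ) := Ideal.span {PowerSeries.X ^ (N + 1)}
  have hq : ∀ i j, Ideal.Quotient.mk I (M₁ i j) = Ideal.Quotient.mk I (M₂ i j) := by
    intro i j
    rw [Ideal.Quotient.eq, Ideal.mem_span_singleton, PowerSeries.X_pow_dvd_iff]
    intro m hm
    rw [map_sub, h i j m (by omega), sub_self]
  have hdet : Ideal.Quotient.mk I (Matrix.det M₁) = Ideal.Quotient.mk I (Matrix.det M₂) := by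
    rw [RingHom.map_det, RingHom.map_det]
    congr 1
    ext i j
    exact hq i j
  rw [Ideal.Quotient.eq, Ideal.mem_span_singleton, PowerSeries.X_pow_dvd_iff] at hdet
  have := hdet N (by omega)
  rw [map_sub, sub_eq_zero] at this
  exact this

open Finset in
theorem cauchyBinet {R : Type*} [CommRing R] {d K : ℕ}
    (A B : Matrix (Fin d) (Fin K) R) :
    (Matrix.of fun i j => ∑ e : Fin K, A i e * B j e).det =
      ∑ g ∈ Finset.univ.filter (fun g : Fin d → Fin K => StrictMono g),
        (A.submatrix id g).det * (B.submatrix id g).det := by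
  classical
  have step1 : (Matrix.of fun i j => ∑ e : Fin K, A i e * B j e).det
      = ∑ f : Fin d → Fin K, (∏ i, A i (f i)) * (Matrix.of fun i j => B j (f i)).det := by
    have hrows : (Matrix.of fun i j => ∑ e : Fin K, A i e * B j e)
        = fun i => ∑ e : Fin K, A i e • (fun j => B j e) := by
      ext i j
      simp [Finset.sum_apply]
    show Matrix.detRowAlternating _ = _
    rw [hrows]
    have hms := MultilinearMap.map_sum
      (Matrix.detRowAlternating (R := R) (n := Fin d)).toMultilinearMap
      (fun (i : Fin d) (e : Fin K) => A i e • (fun j => B j e))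
    erw [hms]
    refine Finset.sum_congr rfl fun f _ => ?_
    rw [MultilinearMap.map_smul_univ]
    rfl
  rw [step1]
  rw [← Finset.sum_filter_add_sum_filter_not Finset.univ
    (fun f : Fin d → Fin K => Function.Injective f)]
  have hzero : ∑ f ∈ Finset.univ.filter (fun f : Fin d → Fin K => ¬ Function.Injective f),
      (∏ i, A i (f i)) * (Matrix.of fun i j => B j (f i)).det = 0 := by
    refine Finset.sum_eq_zero fun f hf => ?_
    rw [Finset.mem_filter] at hf
    obtain ⟨i1, i2, heq, hne⟩ : ∃ i1 i2, f i1 = f i2 ∧ i1 ≠ i2 := by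
      simpa [Function.Injective] using hf.2
    rw [Matrix.det_zero_of_row_eq hne (by ext j; simp [heq]), mul_zero]
  rw [hzero, add_zero]
  have rhs : ∑ g ∈ Finset.univ.filter (fun g : Fin d → Fin K => StrictMono g),
      (A.submatrix id g).det * (B.submatrix id g).det
      = ∑ p ∈ (Finset.univ.filter (fun g : Fin d → Fin K => StrictMono g)) ×ˢ
          (Finset.univ : Finset (Equiv.Perm (Fin d))),
          ((Equiv.Perm.sign p.2 : ℤ) : R) * (∏ i, A (p.2 i) (p.1 i)) *
            (B.submatrix id p.1).det := by
    rw [Finset.sum_product]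
    refine Finset.sum_congr rfl fun g _ => ?_
    rw [Matrix.det_apply, Finset.sum_mul]
    refine Finset.sum_congr rfl fun σ _ => ?_
    simp [Matrix.submatrix_apply, Units.smul_def, zsmul_eq_mul, mul_assoc]
  rw [rhs]
  refine Finset.sum_nbij' (fun f => (f ∘ Tuple.sort f, Tuple.sort f))
    (fun p => p.1 ∘ ⇑(p.2)⁻¹) ?_ ?_ ?_ ?_ ?_
  · intro f hf
    rw [Finset.mem_filter] at hf
    rw [Finset.mem_product, Finset.mem_filter]
    refine ⟨⟨Finset.mem_univ _, ?_⟩, Finset.mem_univ _⟩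
    exact (Tuple.monotone_sort f).strictMono_of_injective (hf.2.comp (Equiv.injective _))
  · intro p hp
    rw [Finset.mem_product, Finset.mem_filter] at hp
    rw [Finset.mem_filter]
    exact ⟨Finset.mem_univ _, hp.1.2.injective.comp (Equiv.injective _)⟩
  · intro f hf
    ext x
    simp
  · intro p hp
    rw [Finset.mem_product, Finset.mem_filter] at hp
    have hsort : Tuple.sort (p.1 ∘ ⇑(p.2)⁻¹) = p.2 := by
      symm
      rw [Tuple.eq_sort_iff]
      constructor
      · intro a b hab
        simp only [Function.comp_apply, Equiv.Perm.inv_def, Equiv.symm_apply_apply]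
        exact hp.1.2.monotone hab
      · intro a b hab habeq
        exfalso
        have : p.1 ((p.2)⁻¹ (p.2 a)) = p.1 ((p.2)⁻¹ (p.2 b)) := habeq
        simp only [Equiv.Perm.inv_def, Equiv.symm_apply_apply] at this
        exact absurd (hp.1.2.injective this) (ne_of_lt hab)
    rw [hsort]
    refine Prod.ext ?_ rfl
    funext x
    simp
  · intro f hf
    dsimp only
    set σ := Tuple.sort f with hσ
    have hsq : ((Equiv.Perm.sign σ : ℤ) : R) * ((Equiv.Perm.sign σ : ℤ) : R) = 1 := by
      rw [← Int.cast_mul, ← Units.val_mul, Int.units_mul_self, Units.val_one, Int.cast_one]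
    have hprod : ∏ i, A (σ i) ((f ∘ ⇑σ) i) = ∏ i, A i (f i) :=
      Equiv.prod_comp σ (fun i => A i (f i))
    have hBdet : (B.submatrix id (f ∘ ⇑σ)).det =
        ((Equiv.Perm.sign σ : ℤ) : R) * (Matrix.of fun i j => B j (f i)).det := by
      rw [← Matrix.det_transpose (B.submatrix id (f ∘ ⇑σ))]
      have h2 : (B.submatrix id (f ∘ ⇑σ)).transpose =
          (Matrix.of fun i j => B j (f i)).submatrix (⇑σ) id := by
        ext i j; rfl
      rw [h2, Matrix.det_permute]
    rw [hprod, hBdet]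
    linear_combination (-((∏ i, A i (f i)) * (Matrix.of fun i j => B j (f i)).det)) * hsq

lemma hX_mul_X_pow (c : ℤ) (t : ℕ → ℂ) (r : ℕ) (hr : 0 ≤ c + r) :
    hX c t * PowerSeries.X ^ r = PowerSeries.C (hZ c t) * PowerSeries.X ^ (c + r).toNat := by
  by_cases hc : 0 ≤ c
  · rw [hX, if_pos hc, hZ, if_pos hc, mul_assoc, ← pow_add]
    congr 2
    omega
  · rw [hX, if_neg hc, hZ, if_neg hc, map_zero, zero_mul, zero_mul]

lemma det_hX_factor {d K : ℕ} (g : Fin d → Fin K) (t : ℕ → ℂ) :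
    (Matrix.of fun i j : Fin d => hX ((g j : ℤ) - (d - 1) + (i : ℕ)) t).det *
        PowerSeries.X ^ (d * (d - 1)) =
      PowerSeries.X ^ ((∑ j : Fin d, (j : ℕ)) + ∑ j : Fin d, (g j : ℕ)) *
        PowerSeries.C
          (Matrix.of fun i j : Fin d => hZ ((g j : ℤ) - (d - 1) + (i : ℕ)) t).det := by
  rw [mul_comm]
  have h1 : (PowerSeries.X : PowerSeries ℂ) ^ (d * (d - 1)) =
      ∏ _j : Fin d, (PowerSeries.X : PowerSeries ℂ) ^ (d - 1) := by
    rw [Finset.prod_const, ← pow_mul, Finset.card_univ, Fintype.card_fin, mul_comm]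
  rw [h1, ← Matrix.det_mul_row]
  have h2 : (Matrix.of fun i j : Fin d =>
        (PowerSeries.X : PowerSeries ℂ) ^ (d - 1) *
          (Matrix.of fun i j : Fin d => hX ((g j : ℤ) - (d - 1) + (i : ℕ)) t) i j) =
      Matrix.of fun i j : Fin d =>
        (PowerSeries.X : PowerSeries ℂ) ^ (i : ℕ) *
          ((PowerSeries.X : PowerSeries ℂ) ^ (g j : ℕ) *
            PowerSeries.C (hZ ((g j : ℤ) - (d - 1) + (i : ℕ)) t)) := by
    ext i j
    rw [Matrix.of_apply, Matrix.of_apply, Matrix.of_apply, mul_comm,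
      hX_mul_X_pow _ _ _ (by omega)]
    rw [show (((g j : ℤ) - (d - 1) + (i : ℕ)) + (d - 1 : ℕ)).toNat = (i : ℕ) + (g j : ℕ) by omega]
    rw [pow_add]
    ring
  rw [h2]
  erw [Matrix.det_mul_column (fun i : Fin d => (PowerSeries.X : PowerSeries ℂ) ^ (i : ℕ))
    (Matrix.of fun i j : Fin d => (PowerSeries.X : PowerSeries ℂ) ^ (g j : ℕ) *
      PowerSeries.C (hZ ((g j : ℤ) - (d - 1) + (i : ℕ)) t))]
  erw [Matrix.det_mul_row]
  have h3 : (Matrix.of fun i j : Fin d =>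
          PowerSeries.C (hZ ((g j : ℤ) - (d - 1) + (i : ℕ)) t)).det =
      PowerSeries.C (Matrix.of fun i j : Fin d => hZ ((g j : ℤ) - (d - 1) + (i : ℕ)) t).det := by
    rw [RingHom.map_det]
    rfl
  erw [h3]
  rw [Finset.prod_pow_eq_pow_sum, Finset.prod_pow_eq_pow_sum, ← mul_assoc, ← pow_add]

lemma coeff_det_Mmat (d K N : ℕ) (t s : ℕ → ℂ) :
    PowerSeries.coeff N (Mmat d K t s).det =
      ∑ g ∈ Finset.univ.filter (fun g : Fin d → Fin K => StrictMono g),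
        if N + 2 * (d * (d - 1)) =
            2 * (∑ j : Fin d, (j : ℕ)) + 2 * (∑ j : Fin d, ((g j) : ℕ)) then
          (Matrix.of fun i j : Fin d => hZ ((g j : ℤ) - (d - 1) + (i : ℕ)) t).det *
            (Matrix.of fun i j : Fin d => hZ ((g j : ℤ) - (d - 1) + (i : ℕ)) s).det
        else 0 := by
  have hcb := cauchyBinet (R := PowerSeries ℂ) (d := d) (K := K)
    (Matrix.of fun (i : Fin d) (e : Fin K) => hX ((e : ℤ) - (d - 1) + (i : ℕ)) t)
    (Matrix.of fun (j : Fin d) (e : Fin K) => hX ((e : ℤ) - (d - 1) + (j : ℕ)) s)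
  have hMeq : Mmat d K t s = Matrix.of fun i j =>
      ∑ e : Fin K, (Matrix.of fun (i : Fin d) (e : Fin K) => hX ((e : ℤ) - (d - 1) + (i : ℕ)) t) i e *
        (Matrix.of fun (j : Fin d) (e : Fin K) => hX ((e : ℤ) - (d - 1) + (j : ℕ)) s) j e := rfl
  rw [hMeq, hcb, map_sum]
  refine Finset.sum_congr rfl fun g hg => ?_
  have hsubA : ((Matrix.of fun (i : Fin d) (e : Fin K) => hX ((e : ℤ) - (d - 1) + (i : ℕ)) t).submatrix id g) =
      Matrix.of fun i j : Fin d => hX ((g j : ℤ) - (d - 1) + (i : ℕ)) t := rfl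
  have hsubB : ((Matrix.of fun (j : Fin d) (e : Fin K) => hX ((e : ℤ) - (d - 1) + (j : ℕ)) s).submatrix id g) =
      Matrix.of fun i j : Fin d => hX ((g j : ℤ) - (d - 1) + (i : ℕ)) s := rfl
  rw [hsubA, hsubB]
  set P := (Matrix.of fun i j : Fin d => hX ((g j : ℤ) - (d - 1) + (i : ℕ)) t).det with hP
  set Q := (Matrix.of fun i j : Fin d => hX ((g j : ℤ) - (d - 1) + (i : ℕ)) s).det with hQ
  have hPQ : PowerSeries.coeff N (P * Q) =
      PowerSeries.coeff (N + 2 * (d * (d - 1))) ((P * Q) * PowerSeries.X ^ (2 * (d * (d - 1)))) := by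
    rw [PowerSeries.coeff_mul_X_pow]
  rw [hPQ]
  have hfac : (P * Q) * PowerSeries.X ^ (2 * (d * (d - 1))) =
      PowerSeries.C ((Matrix.of fun i j : Fin d => hZ ((g j : ℤ) - (d - 1) + (i : ℕ)) t).det *
          (Matrix.of fun i j : Fin d => hZ ((g j : ℤ) - (d - 1) + (i : ℕ)) s).det) *
        PowerSeries.X ^ (((∑ j : Fin d, (j : ℕ)) + ∑ j : Fin d, (g j : ℕ)) +
          (((∑ j : Fin d, (j : ℕ)) + ∑ j : Fin d, (g j : ℕ)))) := by
    have : (P * Q) * PowerSeries.X ^ (2 * (d * (d - 1))) =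
        (P * PowerSeries.X ^ (d * (d - 1))) * (Q * PowerSeries.X ^ (d * (d - 1))) := by
      rw [two_mul, pow_add]; ring
    rw [this, hP, hQ, det_hX_factor, det_hX_factor, map_mul, pow_add]
    ring
  rw [hfac, PowerSeries.coeff_C_mul, PowerSeries.coeff_X_pow]
  by_cases hcond : N + 2 * (d * (d - 1)) =
      2 * (∑ j : Fin d, (j : ℕ)) + 2 * (∑ j : Fin d, ((g j) : ℕ))
  · rw [if_pos hcond, if_pos (by omega), mul_one]
  · rw [if_neg hcond, if_neg (by omega), mul_zero]

/-! helpers for lists -/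

lemma getD_antitone {l : List ℕ} (hl : l.Pairwise (· ≥ ·)) {i i' : ℕ} (h : i ≤ i') :
    l.getD i' 0 ≤ l.getD i 0 := by
  by_cases hi' : i' < l.length
  · have hi : i < l.length := lt_of_le_of_lt h hi'
    rw [List.getD_eq_getElem _ _ hi', List.getD_eq_getElem _ _ hi]
    rcases eq_or_lt_of_le h with rfl | hlt
    · exact le_refl _
    · exact List.pairwise_iff_getElem.mp hl i i' hi hi' hlt
  · rw [List.getD_eq_default _ _ (le_of_not_gt hi')]
    exact Nat.zero_le _

lemma getD_filter_pos : ∀ (L : List ℕ), L.Pairwise (· ≥ ·) →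
    ∀ i, (L.filter (fun x => 0 < x)).getD i 0 = L.getD i 0 := by
  intro L
  induction L with
  | nil => intro _ i; simp
  | cons a L ih =>
    intro hp i
    rw [List.pairwise_cons] at hp
    by_cases ha : 0 < a
    · rw [List.filter_cons_of_pos (by simpa using ha)]
      cases i with
      | zero => simp
      | succ i => simpa using ih hp.2 i
    · have ha0 : a = 0 := by omega
      have hall : ∀ x ∈ L, x = 0 := fun x hx => by
        have := hp.1 x hx; omega
      have hfil : (a :: L).filter (fun x => 0 < x) = [] := by
        rw [List.filter_eq_nil_iff]
        intro x hx
        rcases List.mem_cons.mp hx with rfl | hx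
        · simpa using ha
        · simp [hall x hx]
      rw [hfil]
      have : (a :: L).getD i 0 = 0 := by
        by_cases hi : i < (a :: L).length
        · rw [List.getD_eq_getElem _ _ hi]
          have : (a :: L)[i] ∈ a :: L := List.getElem_mem _
          rcases List.mem_cons.mp this with h1 | h2
          · rw [h1, ha0]
          · exact hall _ h2
        · rw [List.getD_eq_default _ _ (le_of_not_gt hi)]
      rw [this, show ([] : List ℕ).getD i 0 = 0 from by simp]

lemma sort_coe_eq_reverse {l : List ℕ} (hl : l.Pairwise (· ≥ ·)) :
    Multiset.sort (↑l : Multiset ℕ) (· ≤ ·) = l.reverse := by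
  refine List.Perm.eq_of_pairwise' (Multiset.pairwise_sort _ _) ?_ ?_
  · rw [List.pairwise_reverse]
    exact hl.imp (fun h => h)
  · exact (Multiset.coe_eq_coe.mp (by rw [Multiset.sort_eq])).trans (List.reverse_perm l).symm

lemma strictMono_shift {d K : ℕ} {g : Fin d → Fin K} (hg : StrictMono g) :
    ∀ (k : ℕ) (a b : Fin d), (a : ℕ) = (b : ℕ) + k → (g b : ℕ) + k ≤ (g a : ℕ) := by
  intro k
  induction k with
  | zero =>
    intro a b hab
    have h : a = b := Fin.ext (by omega)
    subst h
    omega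
  | succ k ih =>
    intro a b hab
    have ha' : (b : ℕ) + k < d := by have := a.isLt; omega
    have h1 := ih ⟨(b : ℕ) + k, ha'⟩ b (by simp)
    have h2 : (⟨(b : ℕ) + k, ha'⟩ : Fin d) < a := by
      rw [Fin.lt_def]; simp; omega
    have := hg h2
    rw [Fin.lt_def] at this
    omega

lemma strictMono_le_val {d K : ℕ} {g : Fin d → Fin K} (hg : StrictMono g) (j : Fin d) :
    (j : ℕ) ≤ (g j : ℕ) := by
  have h0 : 0 < d := j.pos
  have := strictMono_shift hg (j : ℕ) j ⟨0, h0⟩ (by simp)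
  omega

lemma jt_pad (d : ℕ) (l : List ℕ) (hl : l.length ≤ d) (t : ℕ → ℂ) :
    (Matrix.of fun i j : Fin d => hZ ((l.getD i 0 : ℤ) - i + j) t).det =
      (Matrix.of fun i j : Fin l.length => hZ ((l.get i : ℤ) - i + j) t).det := by
  set ℓ := l.length with hℓ
  have he1 : ∀ a : Fin ℓ,
      (((finSumFinEquiv.trans (finCongr (show ℓ + (d - ℓ) = d by omega))) (Sum.inl a) : Fin d) : ℕ)
        = (a : ℕ) := fun a => by simp
  have he2 : ∀ b : Fin (d - ℓ),
      (((finSumFinEquiv.trans (finCongr (show ℓ + (d - ℓ) = d by omega))) (Sum.inr b) : Fin d) : ℕ)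
        = ℓ + (b : ℕ) := fun b => by simp
  set e : Fin ℓ ⊕ Fin (d - ℓ) ≃ Fin d :=
    finSumFinEquiv.trans (finCongr (show ℓ + (d - ℓ) = d by omega)) with he
  rw [← Matrix.det_submatrix_equiv_self e]
  have hblock : (Matrix.of fun i j : Fin d => hZ ((l.getD i 0 : ℤ) - i + j) t).submatrix e e =
      Matrix.fromBlocks
        (Matrix.of fun i j : Fin ℓ => hZ ((l.get i : ℤ) - i + j) t)
        (Matrix.of fun (i : Fin ℓ) (j : Fin (d - ℓ)) => hZ ((l.get i : ℤ) - i + ((ℓ : ℤ) + j)) t)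
        0
        (Matrix.of fun i j : Fin (d - ℓ) => hZ ((j : ℤ) - i) t) := by
    ext i j
    rcases i with a | a <;> rcases j with b | b <;>
      simp only [Matrix.submatrix_apply, Matrix.fromBlocks_apply₁₁, Matrix.fromBlocks_apply₁₂,
        Matrix.fromBlocks_apply₂₁, Matrix.fromBlocks_apply₂₂, Matrix.of_apply,
        Matrix.zero_apply] <;>
      simp only [he1, he2]
    · rw [List.getD_eq_getElem _ _ a.isLt]
      rfl
    · rw [List.getD_eq_getElem _ _ a.isLt]
      norm_cast
    · rw [List.getD_eq_default _ _ (by omega : l.length ≤ ℓ + (a : ℕ))]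
      rw [hZ_of_neg (by have := b.isLt; push_cast; omega)]
    · rw [List.getD_eq_default _ _ (by omega : l.length ≤ ℓ + (a : ℕ))]
      congr 1
      push_cast
      ring
  rw [hblock, Matrix.det_fromBlocks_zero₂₁]
  have hD : (Matrix.of fun i j : Fin (d - ℓ) => hZ ((j : ℤ) - i) t).det = 1 := by
    rw [Matrix.det_of_upperTriangular (by
      intro i j hij
      exact hZ_of_neg (by simp at hij ⊢; push_cast; omega) t)]
    refine Finset.prod_eq_one fun i _ => ?_
    simpa using hZ_zero t
  rw [hD, mul_one]


lemma det_rev_single {d K : ℕ} (pad : ℕ → ℕ) (g : Fin d → Fin K)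
    (hgv : ∀ j : Fin d, (g j : ℕ) = pad (d - 1 - (j : ℕ)) + (j : ℕ)) (u : ℕ → ℂ) :
    (Matrix.of fun i j : Fin d => hZ ((g j : ℤ) - (d - 1) + (i : ℕ)) u).det =
      ((Equiv.Perm.sign (Fin.revPerm : Equiv.Perm (Fin d)) : ℤ) : ℂ) *
        (Matrix.of fun i j : Fin d => hZ ((pad (i : ℕ) : ℤ) - (i : ℕ) + (j : ℕ)) u).det := by
  rw [← Matrix.det_transpose (Matrix.of fun i j : Fin d => hZ ((g j : ℤ) - (d - 1) + (i : ℕ)) u)]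
  have h2 : (Matrix.of fun i j : Fin d => hZ ((g j : ℤ) - (d - 1) + (i : ℕ)) u).transpose =
      (Matrix.of fun i j : Fin d =>
        hZ ((pad (i : ℕ) : ℤ) - (i : ℕ) + (j : ℕ)) u).submatrix
          (⇑(Fin.revPerm : Equiv.Perm (Fin d))) id := by
    ext i j
    simp only [Matrix.transpose_apply, Matrix.submatrix_apply, Matrix.of_apply, id_eq,
      Fin.revPerm_apply, Fin.val_rev]
    congr 1
    have hv := hgv i
    have hiv := i.isLt
    have hc : ((g i : ℕ) : ℤ) = (pad (d - 1 - (i : ℕ)) : ℤ) + (i : ℕ) := by exact_mod_cast hv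
    rw [show d - ((i : ℕ) + 1) = d - 1 - (i : ℕ) by omega, hc]
    rw [show ((d - 1 - (i:ℕ) : ℕ) : ℤ) = (d : ℤ) - 1 - (i : ℕ) by push_cast; omega]
    ring
  rw [h2, Matrix.det_permute]

lemma det_rev_pair {d K : ℕ} (pad : ℕ → ℕ) (g : Fin d → Fin K)
    (hgv : ∀ j : Fin d, (g j : ℕ) = pad (d - 1 - (j : ℕ)) + (j : ℕ)) (t s : ℕ → ℂ) :
    (Matrix.of fun i j : Fin d => hZ ((g j : ℤ) - (d - 1) + (i : ℕ)) t).det *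
      (Matrix.of fun i j : Fin d => hZ ((g j : ℤ) - (d - 1) + (i : ℕ)) s).det =
    (Matrix.of fun i j : Fin d => hZ ((pad (i : ℕ) : ℤ) - (i : ℕ) + (j : ℕ)) t).det *
      (Matrix.of fun i j : Fin d => hZ ((pad (i : ℕ) : ℤ) - (i : ℕ) + (j : ℕ)) s).det := by
  rw [det_rev_single pad g hgv t, det_rev_single pad g hgv s]
  have hsq : ((Equiv.Perm.sign (Fin.revPerm : Equiv.Perm (Fin d)) : ℤ) : ℂ) *
      ((Equiv.Perm.sign (Fin.revPerm : Equiv.Perm (Fin d)) : ℤ) : ℂ) = 1 := by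
    rw [← Int.cast_mul, ← Units.val_mul, Int.units_mul_self, Units.val_one, Int.cast_one]
  linear_combination
    ((Matrix.of fun i j : Fin d => hZ ((pad (i : ℕ) : ℤ) - (i : ℕ) + (j : ℕ)) t).det *
      (Matrix.of fun i j : Fin d => hZ ((pad (i : ℕ) : ℤ) - (i : ℕ) + (j : ℕ)) s).det) * hsq

/-! partition list helpers -/

noncomputable def dlist {n : ℕ} (lam : n.Partition) : List ℕ :=
  (lam.parts.sort (· ≤ ·)).reverse

lemma dlist_pairwise {n : ℕ} (lam : n.Partition) : (dlist lam).Pairwise (· ≥ ·) := by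
  rw [dlist, List.pairwise_reverse]
  exact (Multiset.pairwise_sort _ (· ≤ ·)).imp (fun h => h)

lemma dlist_length {n : ℕ} (lam : n.Partition) :
    (dlist lam).length = Multiset.card lam.parts := by
  rw [dlist, List.length_reverse, Multiset.length_sort]

lemma dlist_coe {n : ℕ} (lam : n.Partition) : ((dlist lam : List ℕ) : Multiset ℕ) = lam.parts := by
  rw [dlist, Multiset.coe_reverse, Multiset.sort_eq]

lemma dlist_sum {n : ℕ} (lam : n.Partition) : (dlist lam).sum = n := by
  have := congrArg Multiset.sum (dlist_coe lam)
  rw [Multiset.sum_coe] at this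
  rw [this, lam.parts_sum]

lemma dlist_mem_pos {n : ℕ} (lam : n.Partition) {x : ℕ} (hx : x ∈ dlist lam) : 0 < x :=
  lam.parts_pos (by rw [← dlist_coe lam]; exact Multiset.mem_coe.mpr hx)

lemma dlist_getD_le {n : ℕ} (lam : n.Partition) (i : ℕ) : (dlist lam).getD i 0 ≤ n := by
  by_cases hi : i < (dlist lam).length
  · rw [List.getD_eq_getElem _ _ hi]
    have hmem : (dlist lam)[i] ∈ lam.parts := by
      rw [← dlist_coe lam]
      exact Multiset.mem_coe.mpr (List.getElem_mem _)
    have := Multiset.single_le_sum (fun x _ => Nat.zero_le x) _ hmem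
    rw [lam.parts_sum] at this
    exact this
  · rw [List.getD_eq_default _ _ (le_of_not_gt hi)]
    exact Nat.zero_le _

lemma sum_getD (l : List ℕ) : ∀ d, l.length ≤ d →
    ∑ i ∈ Finset.range d, l.getD i 0 = l.sum := by
  induction l with
  | nil => intro d _; simp
  | cons a l ih =>
    intro d hd
    obtain ⟨d', rfl⟩ : ∃ d', d = d' + 1 := ⟨d - 1, by simp at hd; omega⟩
    rw [Finset.sum_range_succ']
    simp only [List.getD_cons_succ, List.getD_cons_zero]
    rw [ih d' (by simpa using hd)]
    simp [add_comm]

lemma dlist_inj {n : ℕ} {lam1 lam2 : n.Partition} {d : ℕ}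
    (h1 : (dlist lam1).length ≤ d) (h2 : (dlist lam2).length ≤ d)
    (h : ∀ i < d, (dlist lam1).getD i 0 = (dlist lam2).getD i 0) : lam1 = lam2 := by
  have key : ∀ (la lb : n.Partition), (dlist la).length ≤ d → (dlist lb).length ≤ d →
      (∀ i < d, (dlist la).getD i 0 = (dlist lb).getD i 0) →
      (dlist la).length ≤ (dlist lb).length := by
    intro la lb hla hlb hab
    by_contra hlt
    push_neg at hlt
    set i := (dlist lb).length with hi
    have hi1 : i < (dlist la).length := hlt
    have hv1 : 0 < (dlist la).getD i 0 := by
      rw [List.getD_eq_getElem _ _ hi1]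
      exact dlist_mem_pos la (List.getElem_mem _)
    have hv2 : (dlist lb).getD i 0 = 0 := List.getD_eq_default _ _ (le_refl _)
    have := hab i (by omega)
    omega
  have hll : (dlist lam1).length = (dlist lam2).length :=
    le_antisymm (key lam1 lam2 h1 h2 h) (key lam2 lam1 h2 h1 (fun i hi => (h i hi).symm))
  have hlists : dlist lam1 = dlist lam2 := by
    refine List.ext_getElem hll (fun i hi1 hi2 => ?_)
    have := h i (by omega)
    rwa [List.getD_eq_getElem _ _ hi1, List.getD_eq_getElem _ _ hi2] at this
  exact Nat.Partition.ext (by rw [← dlist_coe lam1, ← dlist_coe lam2, hlists])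

open Finset in
lemma sum_strictMono_eq (d : ℕ) (hd : 1 ≤ d) (N : ℕ) (t s : ℕ → ℂ) :
    (∑ g ∈ Finset.univ.filter (fun g : Fin d → Fin (N + d) => StrictMono g),
        if N + 2 * (d * (d - 1)) =
            2 * (∑ j : Fin d, (j : ℕ)) + 2 * (∑ j : Fin d, ((g j) : ℕ)) then
          (Matrix.of fun i j : Fin d => hZ ((g j : ℤ) - (d - 1) + (i : ℕ)) t).det *
            (Matrix.of fun i j : Fin d => hZ ((g j : ℤ) - (d - 1) + (i : ℕ)) s).det
        else 0) =
      if 2 ∣ N then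
        ∑ lam ∈ Finset.univ.filter
          (fun lam : (N / 2).Partition => Multiset.card lam.parts ≤ d),
          schur lam t * schur lam s
      else 0 := by
  have hgauss : 2 * ∑ j : Fin d, (j : ℕ) = d * (d - 1) := by
    rw [Fin.sum_univ_eq_sum_range (fun i => i) d, mul_comm, Finset.sum_range_id_mul_two]
  by_cases h2 : 2 ∣ N
  swap
  · rw [if_neg h2]
    refine Finset.sum_eq_zero fun g _ => if_neg (fun hc => h2 ?_)
    omega
  rw [if_pos h2]
  set n := N / 2 with hn2
  have hN : N = 2 * n := by omega
  rw [← Finset.sum_filter, Finset.filter_filter]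
  refine (Finset.sum_nbij
    (fun lam (j : Fin d) => (⟨(dlist lam).getD (d - 1 - (j : ℕ)) 0 + (j : ℕ), by
      have h1 := dlist_getD_le lam (d - 1 - (j : ℕ))
      have h2 := j.isLt
      omega⟩ : Fin (N + d))) ?_ ?_ ?_ ?_).symm
  · -- maps to
    intro lam hlam
    rw [Finset.mem_filter] at hlam ⊢
    have hlen : (dlist lam).length ≤ d := by rw [dlist_length]; exact hlam.2
    refine ⟨Finset.mem_univ _, ?_, ?_⟩
    · intro a b hab
      have hab' : (a : ℕ) < (b : ℕ) := hab
      have hpad := getD_antitone (dlist_pairwise lam)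
        (show d - 1 - (b : ℕ) ≤ d - 1 - (a : ℕ) by omega)
      rw [Fin.lt_def]
      simp only
      omega
    · have hrev : ∑ j : Fin d, (dlist lam).getD (d - 1 - (j : ℕ)) 0 = n := by
        have e1 : ∀ j : Fin d, (dlist lam).getD (d - 1 - (j : ℕ)) 0 =
            (dlist lam).getD ((Fin.rev j : Fin d) : ℕ) 0 := by
          intro j
          congr 1
          rw [Fin.val_rev]
          omega
        rw [Finset.sum_congr rfl (fun j _ => e1 j)]
        rw [show (∑ j : Fin d, (dlist lam).getD ((Fin.rev j : Fin d) : ℕ) 0) =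
          ∑ j : Fin d, (dlist lam).getD (j : ℕ) 0 from
            Equiv.sum_comp Fin.revPerm (fun j : Fin d => (dlist lam).getD (j : ℕ) 0)]
        rw [Fin.sum_univ_eq_sum_range (fun i => (dlist lam).getD i 0) d]
        rw [sum_getD _ _ hlen, dlist_sum]
      have hsplit : ∑ j : Fin d,
          (((⟨(dlist lam).getD (d - 1 - (j : ℕ)) 0 + (j : ℕ), by
            have h1 := dlist_getD_le lam (d - 1 - (j : ℕ))
            have h2 := j.isLt
            omega⟩ : Fin (N + d))) : ℕ) =
          (∑ j : Fin d, (dlist lam).getD (d - 1 - (j : ℕ)) 0) + ∑ j : Fin d, (j : ℕ) := by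
        rw [← Finset.sum_add_distrib]
      rw [hsplit, hrev]
      omega
  · -- inj on
    intro lam1 h1 lam2 h2 heq
    simp only [Finset.coe_filter, Set.mem_setOf_eq, Finset.mem_univ, true_and] at h1 h2
    have hlen1 : (dlist lam1).length ≤ d := by rw [dlist_length]; exact h1
    have hlen2 : (dlist lam2).length ≤ d := by rw [dlist_length]; exact h2
    refine dlist_inj hlen1 hlen2 (fun i hi => ?_)
    have := congrFun heq (⟨d - 1 - i, by omega⟩ : Fin d)
    have hval := congrArg Fin.val this
    simp only at hval
    rw [show d - 1 - (d - 1 - i) = i by omega] at hval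
    omega
  · -- surj on
    intro g hg
    simp only [Finset.coe_filter, Set.mem_setOf_eq, Finset.mem_univ, true_and] at hg
    obtain ⟨hSM, hcond⟩ := hg
    have hbd : ∀ i : ℕ, i < d → d - 1 - i < d := by omega
    set F : Fin d → ℕ := fun i => (g ⟨d - 1 - (i : ℕ), by omega⟩ : ℕ) + (i : ℕ) + 1 - d with hF
    have hguard : ∀ i : Fin d, d ≤ (g ⟨d - 1 - (i : ℕ), by omega⟩ : ℕ) + (i : ℕ) + 1 := by
      intro i
      have := strictMono_le_val hSM ⟨d - 1 - (i : ℕ), by omega⟩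
      simp only at this
      have := i.isLt
      omega
    set L : List ℕ := List.ofFn F with hLdef
    have hLlen : L.length = d := by rw [hLdef, List.length_ofFn]
    have hLpair : L.Pairwise (· ≥ ·) := by
      rw [hLdef, List.pairwise_ofFn]
      intro i j hij
      have hshift := strictMono_shift hSM ((j : ℕ) - (i : ℕ))
        ⟨d - 1 - (i : ℕ), by omega⟩ ⟨d - 1 - (j : ℕ), by omega⟩
        (by simp only; have := j.isLt; omega)
      have hg1 := hguard i
      have hg2 := hguard j
      simp only [hF]
      omega
    have hLsum : L.sum = n := by
      have hcast : (L.sum : ℤ) = (n : ℤ) := by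
        rw [hLdef, List.sum_ofFn]
        push_cast
        have e1 : ∀ i : Fin d, ((F i : ℕ) : ℤ) =
            ((g (Fin.rev i) : ℕ) : ℤ) - ((Fin.rev i : Fin d) : ℕ) := by
          intro i
          have hrevi : (Fin.rev i : Fin d) = ⟨d - 1 - (i : ℕ), by omega⟩ := by
            apply Fin.ext
            rw [Fin.val_rev]
            simp only
            omega
          rw [hrevi]
          simp only [hF]
          have := hguard i
          have := i.isLt
          push_cast [Nat.cast_sub (hguard i)]
          omega
        rw [Finset.sum_congr rfl (fun i _ => e1 i)]
        rw [Finset.sum_sub_distrib]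
        have hrc1 : (∑ x : Fin d, ((g (Fin.rev x) : ℕ) : ℤ)) = ∑ x : Fin d, ((g x : ℕ) : ℤ) := by
          simp_rw [← Fin.revPerm_apply]
          exact Equiv.sum_comp Fin.revPerm (fun j : Fin d => ((g j : ℕ) : ℤ))
        have hrc2 : (∑ x : Fin d, (((Fin.rev x : Fin d) : ℕ) : ℤ)) =
            ∑ x : Fin d, ((x : ℕ) : ℤ) := by
          simp_rw [← Fin.revPerm_apply]
          exact Equiv.sum_comp Fin.revPerm (fun j : Fin d => ((j : ℕ) : ℤ))
        rw [hrc1, hrc2]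
        have hc2 : (N : ℤ) + 2 * (d * (d - 1 : ℕ)) =
            2 * (∑ j : Fin d, ((j : ℕ) : ℤ)) + 2 * (∑ j : Fin d, ((g j : ℕ) : ℤ)) := by
          exact_mod_cast congrArg (Nat.cast : ℕ → ℤ) hcond
        have hg2 : 2 * (∑ j : Fin d, ((j : ℕ) : ℤ)) = ((d * (d - 1 : ℕ) : ℕ) : ℤ) := by
          exact_mod_cast congrArg (Nat.cast : ℕ → ℤ) hgauss
        push_cast at hc2 hg2
        omega
      exact_mod_cast hcast
    set lF : List ℕ := L.filter (fun x => 0 < x) with hlF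
    have hlFpair : lF.Pairwise (· ≥ ·) := hLpair.filter _
    have hlFsum : lF.sum = n := by
      have hsplit := Multiset.sum_filter_add_sum_filter_not
        (s := (↑L : Multiset ℕ)) (fun x => 0 < x)
      have hzero : (Multiset.filter (fun x => ¬ 0 < x) (↑L : Multiset ℕ)).sum = 0 := by
        refine Multiset.sum_eq_zero fun x hx => ?_
        have := Multiset.of_mem_filter hx
        omega
      rw [hzero, add_zero] at hsplit
      have : (Multiset.filter (fun x => 0 < x) (↑L : Multiset ℕ)) = (↑lF : Multiset ℕ) := by
        rw [hlF, ← Multiset.filter_coe]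
      rw [this] at hsplit
      rw [show (↑lF : Multiset ℕ).sum = lF.sum from Multiset.sum_coe lF,
        show (↑L : Multiset ℕ).sum = L.sum from Multiset.sum_coe L] at hsplit
      rw [hsplit, hLsum]
    have hpos : ∀ {x : ℕ}, x ∈ (↑lF : Multiset ℕ) → 0 < x := by
      intro x hx
      have := List.of_mem_filter (Multiset.mem_coe.mp hx)
      simpa using this
    have hsum : (↑lF : Multiset ℕ).sum = n := by
      rw [show (↑lF : Multiset ℕ).sum = lF.sum from Multiset.sum_coe lF, hlFsum]
    refine ⟨⟨(↑lF : Multiset ℕ), hpos, hsum⟩, ?_, ?_⟩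
    · simp only [Finset.coe_filter, Set.mem_setOf_eq, Finset.mem_univ, true_and]
      rw [show Multiset.card (↑lF : Multiset ℕ) = lF.length from Multiset.coe_card lF]
      calc lF.length ≤ L.length := List.length_filter_le _ _
        _ = d := hLlen
    · -- gf lam = g
      have hdl : dlist (⟨(↑lF : Multiset ℕ), hpos, hsum⟩ : n.Partition) = lF := by
        rw [dlist]
        show (Multiset.sort (↑lF : Multiset ℕ) (· ≤ ·)).reverse = lF
        rw [sort_coe_eq_reverse hlFpair, List.reverse_reverse]
      funext j
      apply Fin.ext
      simp only [hdl]
      have hidx : d - 1 - (j : ℕ) < d := by omega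
      rw [getD_filter_pos L hLpair (d - 1 - (j : ℕ))]
      rw [List.getD_eq_getElem _ _ (by omega : d - 1 - (j : ℕ) < L.length)]
      simp only [hLdef, List.getElem_ofFn]
      have hinner : (⟨d - 1 - ((⟨d - 1 - (j : ℕ), by omega⟩ : Fin d) : ℕ), by omega⟩ : Fin d)
          = j := by
        apply Fin.ext
        simp only
        have := j.isLt
        omega
      simp only [hF]
      have := j.isLt
      have hgj := strictMono_le_val hSM j
      have hgx : (g ⟨d - 1 - (d - 1 - (j:ℕ)), by omega⟩ : ℕ) = (g j : ℕ) := by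
        have h5 : (⟨d - 1 - (d - 1 - (j:ℕ)), by omega⟩ : Fin d) = j :=
          Fin.ext (by
            show d - 1 - (d - 1 - (j:ℕ)) = (j:ℕ)
            have := j.isLt
            omega)
        rw [h5]
      rw [hgx]
      omega
  · -- values
    intro lam hlam
    rw [Finset.mem_filter] at hlam
    have hlen : (dlist lam).length ≤ d := by rw [dlist_length]; exact hlam.2
    have hpadval : ∀ j : Fin d,
        (((⟨(dlist lam).getD (d - 1 - (j : ℕ)) 0 + (j : ℕ), by
            have h1 := dlist_getD_le lam (d - 1 - (j : ℕ))
            have h2 := j.isLt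
            omega⟩ : Fin (N + d))) : ℕ) =
          (fun i => (dlist lam).getD i 0) (d - 1 - (j : ℕ)) + (j : ℕ) := fun j => rfl
    rw [det_rev_pair (fun i => (dlist lam).getD i 0) _ hpadval t s]
    rw [jt_pad d (dlist lam) hlen t, jt_pad d (dlist lam) hlen s]
    rfl

theorem stmt_16 (d : ℕ) (hd : 1 ≤ d) (t s : ℕ → ℂ) :
    (PowerSeries.mk fun N =>
        if h2 : 2 ∣ N then
          ∑ lam ∈ Finset.univ.filter
            (fun lam : (N / 2).Partition => lam.parts.card ≤ d),
            schur lam t * schur lam s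
        else 0) =
      Matrix.det (Matrix.of fun i j : Fin d => phi ((i : ℤ) - (j : ℤ)) t s) := by
  refine PowerSeries.ext fun N => ?_
  rw [PowerSeries.coeff_mk]
  have h1 : PowerSeries.coeff N
      (Matrix.det (Matrix.of fun i j : Fin d => phi ((i : ℤ) - (j : ℤ)) t s)) =
      PowerSeries.coeff N (Matrix.det (Mmat d (N + d) t s)) :=
    coeff_det_congr _ _ (fun i j n hn => coeff_phi_eq_coeff_Mmat d N t s i j n hn)
  rw [h1, coeff_det_Mmat d (N + d) N t s, sum_strictMono_eq d hd N t s]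
  exact dite_eq_ite
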